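/- arXiv:0904.1505 — 2 statements merged into one kernel-verified Lean document; each statement's English description precedes it below -/
import Mathlib

section
/- Let L be a negative definite real n×n matrix and e ∈ ℝ^n. Then every solution of the rate equation y' = diag(y)(L y + e) starting in the open positive cone is bounded on its maximal interval of existence, and hence exists for all t ≥ 0. -/
open Matrix

lemma neg_def_coercive (n : ℕ) (hn : 0 < n) (L : Matrix (Fin n) (Fin n) ℝ)
    (hL : ∀ x : Fin n → ℝ, x ≠ 0 → x ⬝ᵥ L.mulVec x < 0) :
    ∃ c : ℝ, 0 < c ∧ ∀ x : Fin n → ℝ, x ⬝ᵥ L.mulVec x ≤ -(c * ‖x‖ ^ 2) := by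
  haveI : Nonempty (Fin n) := ⟨⟨0, hn⟩⟩
  have hcont : Continuous fun x : Fin n → ℝ => x ⬝ᵥ L.mulVec x :=
    continuous_id.dotProduct (continuous_const.matrix_mulVec continuous_id)
  have hs : (Metric.sphere (0 : Fin n → ℝ) 1).Nonempty :=
    NormedSpace.sphere_nonempty.2 zero_le_one
  obtain ⟨u, hu, hmax⟩ := (isCompact_sphere (0 : Fin n → ℝ) 1).exists_isMaxOn hs
    hcont.continuousOn
  have hu1 : ‖u‖ = 1 := by simpa using hu
  have hune : u ≠ 0 := by intro h; rw [h] at hu1; simp at hu1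
  have hulu : u ⬝ᵥ L.mulVec u < 0 := hL u hune
  refine ⟨-(u ⬝ᵥ L.mulVec u), by linarith, fun x => ?_⟩
  rcases eq_or_ne x 0 with rfl | hx
  · simp
  · have hxn : (0:ℝ) < ‖x‖ := norm_pos_iff.2 hx
    set v : Fin n → ℝ := ‖x‖⁻¹ • x with hv
    have hvs : v ∈ Metric.sphere (0 : Fin n → ℝ) 1 := by
      simp [hv, norm_smul, abs_of_pos (inv_pos.2 hxn), inv_mul_cancel₀ hxn.ne']
    have h1 : v ⬝ᵥ L.mulVec v ≤ u ⬝ᵥ L.mulVec u := hmax hvs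
    have h2 : v ⬝ᵥ L.mulVec v = ‖x‖⁻¹ ^ 2 * (x ⬝ᵥ L.mulVec x) := by
      rw [hv, Matrix.mulVec_smul, smul_dotProduct, dotProduct_smul,
        smul_eq_mul, smul_eq_mul]
      ring
    rw [h2] at h1
    have h3 := mul_le_mul_of_nonneg_left h1 (sq_nonneg ‖x‖)
    have h4 : ‖x‖^2 * (‖x‖⁻¹ ^ 2 * (x ⬝ᵥ L.mulVec x)) = x ⬝ᵥ L.mulVec x := by
      field_simp
    rw [h4] at h3
    linarith

lemma pos_of_linear_ode {T : ℝ} {z g : ℝ → ℝ}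
    (hz : ∀ t ∈ Set.Ico (0:ℝ) T, HasDerivAt z (z t * g t) t)
    (hg : ∀ t ∈ Set.Ico (0:ℝ) T, ContinuousAt g t)
    (hz0 : 0 < z 0) : ∀ t ∈ Set.Ico (0:ℝ) T, 0 < z t := by
  intro t ht
  by_contra h
  push_neg at h
  have hsub : Set.Icc (0:ℝ) t ⊆ Set.Ico 0 T := fun u hu =>
    ⟨hu.1, lt_of_le_of_lt hu.2 ht.2⟩
  have hzc : ContinuousOn z (Set.Icc 0 t) := fun u hu =>
    ((hz u (hsub hu)).continuousAt).continuousWithinAt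
  have h0t : (0:ℝ) ≤ t := ht.1
  obtain ⟨s, hs, hzs⟩ : ∃ s ∈ Set.Icc (0:ℝ) t, z s = 0 := by
    have := intermediate_value_Icc' h0t hzc
    have h0mem : (0:ℝ) ∈ Set.Icc (z t) (z 0) := ⟨h, le_of_lt hz0⟩
    obtain ⟨s, hs1, hs2⟩ := this h0mem
    exact ⟨s, hs1, hs2⟩
  have hssub : Set.Icc (0:ℝ) s ⊆ Set.Ico 0 T := fun u hu =>
    hsub ⟨hu.1, le_trans hu.2 hs.2⟩
  have hgc : ContinuousOn g (Set.Icc 0 s) := fun u hu =>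
    (hg u (hssub hu)).continuousWithinAt
  obtain ⟨C, hC⟩ := (isCompact_Icc : IsCompact (Set.Icc (0:ℝ) s)).exists_bound_of_continuousOn hgc
  set K := max C 0 with hK
  set w : ℝ → ℝ := fun u => z (s - u) with hw
  have hsmem : ∀ u ∈ Set.Icc (0:ℝ) s, s - u ∈ Set.Icc (0:ℝ) s := fun u hu =>
    ⟨by linarith [hu.2], by linarith [hu.1]⟩
  have hwc : ContinuousOn w (Set.Icc 0 s) := by
    apply ContinuousOn.comp (hzc.mono (fun u hu => ⟨hu.1, le_trans hu.2 hs.2⟩))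
      (continuousOn_const.sub continuousOn_id) hsmem
  have hw' : ∀ u ∈ Set.Ico (0:ℝ) s,
      HasDerivWithinAt w (-(z (s - u) * g (s - u))) (Set.Ici u) u := by
    intro u hu
    have hmem : s - u ∈ Set.Ico (0:ℝ) T := hssub ⟨by linarith [hu.2], by linarith [hu.1]⟩
    have hd := (hz (s - u) hmem).comp u
      (((hasDerivAt_id u).const_sub s))
    simpa [mul_comm, Function.comp_def] using hd.hasDerivWithinAt
  have hbound : ∀ u ∈ Set.Ico (0:ℝ) s, ‖-(z (s - u) * g (s - u))‖ ≤ K * ‖w u‖ + 0 := by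
    intro u hu
    have hmem : s - u ∈ Set.Icc (0:ℝ) s := hsmem u ⟨hu.1, le_of_lt hu.2⟩
    have := hC (s - u) hmem
    rw [norm_neg, norm_mul, add_zero, mul_comm]
    apply mul_le_mul_of_nonneg_right _ (norm_nonneg _)
    calc ‖g (s-u)‖ ≤ C := this
      _ ≤ K := le_max_left _ _
  have hws : ‖w 0‖ ≤ 0 := by simp [hw, hzs]
  have := norm_le_gronwallBound_of_norm_deriv_right_le hwc hw' hws hbound s
    ⟨hs.1, le_refl s⟩
  rw [gronwallBound_ε0, sub_zero] at this
  simp only [zero_mul] at this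
  have hws0 : ‖w s‖ ≤ 0 := this
  have : z 0 = 0 := by
    have h2 : w s = z 0 := by simp [hw]
    rw [h2] at hws0
    exact norm_le_zero_iff.1 hws0
  linarith

/-- If L is negative definite, every solution of the rate equation
y' = diag(y)(Ly + e) starting in the open positive cone is bounded,
uniformly over its (maximal) interval of existence. -/
theorem rate_equation_bounded (n : ℕ) (L : Matrix (Fin n) (Fin n) ℝ)
    (hL : ∀ x : Fin n → ℝ, x ≠ 0 → x ⬝ᵥ L.mulVec x < 0)
    (e : Fin n → ℝ) (y0 : Fin n → ℝ) (hy0 : ∀ a, 0 < y0 a) :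
    ∃ M : ℝ, ∀ T : ℝ, ∀ y : ℝ → Fin n → ℝ,
      y 0 = y0 →
      (∀ t ∈ Set.Ico (0 : ℝ) T,
        HasDerivAt y (fun a => y t a * (L.mulVec (y t) a + e a)) t) →
      ∀ t ∈ Set.Ico (0 : ℝ) T, ‖y t‖ ≤ M := by
  rcases Nat.eq_zero_or_pos n with hn | hn
  · subst hn
    refine ⟨0, fun T y _ _ t _ => ?_⟩
    have : y t = 0 := funext fun a => absurd a.2 (by simp)
    simp [this]
  obtain ⟨c, hc, hcoer⟩ := neg_def_coercive n hn L hL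
  set K : ℝ := (n:ℝ)^2 * ‖e‖ / c with hKdef
  have hK0 : 0 ≤ K := by positivity
  set B : ℝ := max (∑ a, y0 a) K with hBdef
  have hsum0 : 0 < ∑ a, y0 a :=
    Finset.sum_pos (fun a _ => hy0 a) ⟨⟨0, hn⟩, Finset.mem_univ _⟩
  have hB0 : 0 < B := lt_of_lt_of_le hsum0 (le_max_left _ _)
  have hBK : K ≤ B := le_max_right _ _
  refine ⟨B, fun T y hy00 hyd => ?_⟩
  -- componentwise derivatives
  have hcomp : ∀ t ∈ Set.Ico (0:ℝ) T, ∀ a,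
      HasDerivAt (fun u => y u a) (y t a * (L.mulVec (y t) a + e a)) t :=
    fun t ht a => hasDerivAt_pi.mp (hyd t ht) a
  -- positivity of solutions
  have hpos : ∀ t ∈ Set.Ico (0:ℝ) T, ∀ a, 0 < y t a := by
    intro t ht a
    refine pos_of_linear_ode (g := fun u => L.mulVec (y u) a + e a)
      (fun u hu => hcomp u hu a) ?_ (by rw [hy00]; exact hy0 a) t ht
    intro u hu
    have hyc : ContinuousAt y u := (hyd u hu).continuousAt
    have hcw : Continuous fun x : Fin n → ℝ => L.mulVec x a + e a :=
      ((continuous_apply a).comp (continuous_const.matrix_mulVec continuous_id)).add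
        continuous_const
    exact hcw.continuousAt.comp hyc
  -- the Lyapunov function V
  set V : ℝ → ℝ := fun u => ∑ a, y u a with hVdef
  have hVd : ∀ t ∈ Set.Ico (0:ℝ) T,
      HasDerivAt V (∑ a, y t a * (L.mulVec (y t) a + e a)) t :=
    fun t ht => HasDerivAt.fun_sum fun a _ => hcomp t ht a
  have hVeq : ∀ t, (∑ a, y t a * (L.mulVec (y t) a + e a))
      = y t ⬝ᵥ L.mulVec (y t) + y t ⬝ᵥ e := by
    intro t
    simp [dotProduct, mul_add, Finset.sum_add_distrib]
  -- derivative is nonpositive when V is large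
  have hderiv_nonpos : ∀ t ∈ Set.Ico (0:ℝ) T, B < V t →
      (∑ a, y t a * (L.mulVec (y t) a + e a)) ≤ 0 := by
    intro t ht hVB
    rw [hVeq]
    have hposa := hpos t ht
    have hVpos : 0 < V t := lt_trans hB0 hVB
    have h1 : y t ⬝ᵥ e ≤ ‖e‖ * V t := by
      rw [hVdef, Finset.mul_sum]
      apply Finset.sum_le_sum
      intro a _
      calc y t a * e a ≤ y t a * ‖e‖ :=
            mul_le_mul_of_nonneg_left (le_trans (le_abs_self _) (norm_le_pi_norm e a))
              (le_of_lt (hposa a))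
        _ = ‖e‖ * y t a := mul_comm _ _
    have h2 : V t ≤ n * ‖y t‖ :=
      calc V t ≤ ∑ _a : Fin n, ‖y t‖ := Finset.sum_le_sum fun a _ =>
            le_trans (le_abs_self _) (norm_le_pi_norm (y t) a)
        _ = n * ‖y t‖ := by simp [mul_comm]
    have h3 : y t ⬝ᵥ L.mulVec (y t) ≤ -(c * ‖y t‖^2) := hcoer (y t)
    have hKV : K < V t := lt_of_le_of_lt hBK hVB
    have hcK : c * K = (n:ℝ)^2 * ‖e‖ := by
      rw [hKdef]; field_simp
    have hny : (0:ℝ) ≤ ‖y t‖ := norm_nonneg _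
    nlinarith [mul_le_mul h2 h2 hVpos.le (by positivity : (0:ℝ) ≤ (n:ℝ) * ‖y t‖),
      mul_lt_mul_of_pos_left hKV hc,
      mul_pos hVpos hVpos, sq_nonneg (‖y t‖), mul_le_mul_of_nonneg_left hKV.le hc.le]
  -- V stays below B
  have hVle : ∀ t ∈ Set.Ico (0:ℝ) T, V t ≤ B := by
    by_contra hcon
    push_neg at hcon
    obtain ⟨t₁, ht₁, hVt₁⟩ := hcon
    have hV0 : V 0 ≤ B := by
      have : V 0 = ∑ a, y0 a := by rw [hVdef]; simp [hy00]
      rw [this]; exact le_max_left _ _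
    have hsubt : Set.Icc (0:ℝ) t₁ ⊆ Set.Ico 0 T := fun u hu =>
      ⟨hu.1, lt_of_le_of_lt hu.2 ht₁.2⟩
    have hVc : ContinuousOn V (Set.Icc 0 t₁) := fun u hu =>
      ((hVd u (hsubt hu)).continuousAt).continuousWithinAt
    set S : Set ℝ := {u ∈ Set.Icc (0:ℝ) t₁ | V u ≤ B} with hSdef
    have hSsub : S ⊆ Set.Icc 0 t₁ := fun u hu => hu.1
    have hSne : S.Nonempty := ⟨0, ⟨le_refl 0, ht₁.1⟩, hV0⟩
    have hSclosed : IsClosed S := by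
      have : S = Set.Icc (0:ℝ) t₁ ∩ V ⁻¹' Set.Iic B := by
        ext u; exact Iff.rfl
      rw [this]
      exact hVc.preimage_isClosed_of_isClosed isClosed_Icc isClosed_Iic
    have hScomp : IsCompact S := isCompact_Icc.of_isClosed_subset hSclosed hSsub
    set s := sSup S with hsdef
    have hsS : s ∈ S := hScomp.sSup_mem hSne
    have hst₁ : s ≤ t₁ := (hSsub hsS).2
    have hslt : s < t₁ := lt_of_le_of_ne hst₁ (by
      intro hEq
      rw [hEq] at hsS
      exact absurd hsS.2 (not_le.2 hVt₁))
    have hgt : ∀ u ∈ Set.Ioc s t₁, B < V u := by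
      intro u hu
      by_contra hle
      push_neg at hle
      have huS : u ∈ S := ⟨⟨le_trans (hSsub hsS).1 hu.1.le, hu.2⟩, hle⟩
      have := le_csSup (hScomp.bddAbove) huS
      exact absurd this (not_le.2 hu.1)
    have hanti : AntitoneOn V (Set.Icc s t₁) := by
      apply antitoneOn_of_deriv_nonpos (convex_Icc s t₁)
      · exact hVc.mono (fun u hu => ⟨le_trans (hSsub hsS).1 hu.1, hu.2⟩)
      · rw [interior_Icc]
        intro u hu
        exact ((hVd u (hsubt ⟨le_trans (hSsub hsS).1 hu.1.le, hu.2.le⟩)).differentiableAt).differentiableWithinAt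
      · rw [interior_Icc]
        intro u hu
        have humem : u ∈ Set.Ico (0:ℝ) T := hsubt ⟨le_trans (hSsub hsS).1 hu.1.le, hu.2.le⟩
        rw [(hVd u humem).deriv]
        exact hderiv_nonpos u humem (hgt u ⟨hu.1, hu.2.le⟩)
    have := hanti (Set.left_mem_Icc.2 hslt.le) (Set.right_mem_Icc.2 hslt.le) hslt.le
    have : V t₁ ≤ B := le_trans this hsS.2
    exact absurd this (not_le.2 hVt₁)
  -- conclude
  intro t ht
  have hVt := hVle t ht
  have hposa := hpos t ht
  have hVnn : 0 ≤ V t := Finset.sum_nonneg fun a _ => (hposa a).le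
  have : ‖y t‖ ≤ V t := by
    apply (pi_norm_le_iff_of_nonneg hVnn).2
    intro a
    rw [Real.norm_eq_abs, abs_of_pos (hposa a)]
    exact Finset.single_le_sum (fun b _ => (hposa b).le) (Finset.mem_univ a)
  linarith
end

section
/- In the symmetric winner-takes-all case with mutual inhibition ℓ₃₄ = ℓ₄₃ = -m (m > 0) and inputs ℓ₃₁, ℓ₄₂ > 0, the degenerate state (ℓ₃₁, 0) is linearly stable (both Jacobian eigenvalues negative) if and only if ℓ₃₁ > ℓ₄₂/m. -/
open Matrix

/-- Winner-takes-all: with mutual inhibition of strength m > 0 and positive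
inputs, the degenerate state (ℓ₃₁, 0) is linearly stable (all Jacobian
eigenvalues negative) iff ℓ₃₁ > ℓ₄₂/m. -/
theorem wta_degenerate_stability (m l31 l42 : ℝ)
    (hm : 0 < m) (h31 : 0 < l31) (h42 : 0 < l42) :
    let F : ℝ × ℝ → ℝ × ℝ := fun y =>
      (y.1 * (-y.1 - m * y.2 + l31), y.2 * (-y.2 - m * y.1 + l42))
    let J : ℝ × ℝ → Matrix (Fin 2) (Fin 2) ℝ := fun p =>
      !![(fderiv ℝ F p (1, 0)).1, (fderiv ℝ F p (0, 1)).1;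
         (fderiv ℝ F p (1, 0)).2, (fderiv ℝ F p (0, 1)).2]
    (∀ μ : ℝ, (J (l31, 0) - μ • (1 : Matrix (Fin 2) (Fin 2) ℝ)).det = 0
        → μ < 0) ↔ l31 > l42 / m := by
  intro F J
  have hF : ∀ p : ℝ × ℝ, HasFDerivAt F
      (((ContinuousLinearMap.fst ℝ ℝ ℝ).smulRight (-p.1 - m * p.2 + l31) +
        p.1 • ((-ContinuousLinearMap.fst ℝ ℝ ℝ) -
          m • ContinuousLinearMap.snd ℝ ℝ ℝ)).prod
      ((ContinuousLinearMap.snd ℝ ℝ ℝ).smulRight (-p.2 - m * p.1 + l42) +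
        p.2 • ((-ContinuousLinearMap.snd ℝ ℝ ℝ) -
          m • ContinuousLinearMap.fst ℝ ℝ ℝ))) p := by
    intro p
    have h1 : HasFDerivAt (fun y : ℝ × ℝ => y.1 * (-y.1 - m * y.2 + l31)) _ p :=
      (hasFDerivAt_fst (𝕜 := ℝ) (p := p)).mul
        (((hasFDerivAt_fst (𝕜 := ℝ) (p := p)).neg.sub
          ((hasFDerivAt_snd (𝕜 := ℝ) (p := p)).const_mul m)).add_const l31)
    have h2 : HasFDerivAt (fun y : ℝ × ℝ => y.2 * (-y.2 - m * y.1 + l42)) _ p :=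
      (hasFDerivAt_snd (𝕜 := ℝ) (p := p)).mul
        (((hasFDerivAt_snd (𝕜 := ℝ) (p := p)).neg.sub
          ((hasFDerivAt_fst (𝕜 := ℝ) (p := p)).const_mul m)).add_const l42)
    exact (HasFDerivAt.prodMk h1 h2).congr_fderiv (by ext v <;> simp [mul_comm] <;> ring)
  have hf := (hF (l31, 0)).fderiv
  have e1 : (fderiv ℝ F (l31, 0) (1, 0)).1 = -l31 := by
    rw [hf]; simp
  have e2 : (fderiv ℝ F (l31, 0) (0, 1)).1 = -(m * l31) := by
    rw [hf]; simp; ring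
  have e3 : (fderiv ℝ F (l31, 0) (1, 0)).2 = 0 := by
    rw [hf]; simp
  have e4 : (fderiv ℝ F (l31, 0) (0, 1)).2 = l42 - m * l31 := by
    rw [hf]; simp; ring
  have hJ : ∀ μ : ℝ, (J (l31, 0) - μ • (1 : Matrix (Fin 2) (Fin 2) ℝ)).det
      = (-l31 - μ) * (l42 - m * l31 - μ) := by
    intro μ
    have hM : J (l31, 0) - μ • (1 : Matrix (Fin 2) (Fin 2) ℝ)
        = !![-l31 - μ, -(m * l31); 0, l42 - m * l31 - μ] := by
      ext i j
      fin_cases i <;> fin_cases j <;>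
        simp [J, e1, e2, e3, e4, Matrix.sub_apply, Matrix.smul_apply,
          Matrix.one_apply] <;> ring
    rw [hM, Matrix.det_fin_two_of]
    ring
  constructor
  · intro h
    have := h (l42 - m * l31) (by rw [hJ]; ring)
    have h2 : l42 < m * l31 := by linarith
    rw [gt_iff_lt, div_lt_iff₀ hm]
    linarith [mul_comm l31 m]
  · intro h μ hμ
    rw [hJ] at hμ
    rcases mul_eq_zero.1 hμ with h1 | h1
    · linarith
    · have : l42 / m < l31 := h
      rw [div_lt_iff₀ hm] at this
      nlinarith
end
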